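/- If A is symmetric positive definite and ω ∈ (0,2), then the iterates of the projected SOR method converge to the unique minimizer x* of V(x) = (1/2)xᵀAx − xᵀb over x ≥ 0, for any nonnegative initial guess. -/

import Mathlib

open Matrix Finset Filter

variable {n : ℕ}

private lemma psor_cont_quad (A : Matrix (Fin n) (Fin n) ℝ) :
    Continuous fun y : Fin n → ℝ => y ⬝ᵥ (A *ᵥ y) := by
  simp only [dotProduct, mulVec]
  exact continuous_finset_sum _ fun i _ => (continuous_apply i).mul
    (continuous_finset_sum _ fun j _ => continuous_const.mul (continuous_apply j))

private lemma psor_dot_symm (A : Matrix (Fin n) (Fin n) ℝ)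
    (hsym : ∀ i j, A i j = A j i) (p q : Fin n → ℝ) :
    p ⬝ᵥ (A *ᵥ q) = q ⬝ᵥ (A *ᵥ p) := by
  simp only [dotProduct, mulVec, Finset.mul_sum]
  rw [Finset.sum_comm]
  refine Finset.sum_congr rfl fun j _ => Finset.sum_congr rfl fun i _ => ?_
  rw [hsym i j]; ring

private lemma psor_expand (A : Matrix (Fin n) (Fin n) ℝ)
    (hsym : ∀ i j, A i j = A j i) (b u v : Fin n → ℝ) :
    (1/2) * (v ⬝ᵥ (A *ᵥ v)) - v ⬝ᵥ b =
      ((1/2) * (u ⬝ᵥ (A *ᵥ u)) - u ⬝ᵥ b) + (v - u) ⬝ᵥ (A *ᵥ u - b)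
        + (1/2) * ((v - u) ⬝ᵥ (A *ᵥ (v - u))) := by
  have hv : v = u + (v - u) := by abel
  have key := psor_dot_symm A hsym u (v - u)
  conv_lhs => rw [hv]
  simp only [mulVec_add, dotProduct_add, add_dotProduct, dotProduct_sub, sub_dotProduct,
    mulVec_sub] at *
  ring_nf
  ring_nf at key
  linarith

private lemma psor_quad (A : Matrix (Fin n) (Fin n) ℝ)
    (hsym : ∀ i j, A i j = A j i) (b z : Fin n → ℝ) (i : Fin n) (t : ℝ) :
    (1/2) * ((Function.update z i t) ⬝ᵥ (A *ᵥ (Function.update z i t)))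
        - (Function.update z i t) ⬝ᵥ b =
      ((1/2) * (z ⬝ᵥ (A *ᵥ z)) - z ⬝ᵥ b) + (t - z i) * ((A *ᵥ z) i - b i)
        + (1/2) * (A i i * (t - z i)^2) := by
  have hupd : Function.update z i t - z = Pi.single i (t - z i) := by
    funext j
    by_cases h : j = i
    · subst h; simp
    · simp [Function.update_apply, h, Pi.single_apply]
  rw [psor_expand A hsym b z (Function.update z i t), hupd]
  rw [single_dotProduct, single_dotProduct]
  simp only [mulVec_single, Pi.sub_apply, Pi.smul_apply, col_apply, op_smul_eq_mul]
  ring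

private noncomputable def psorT (A : Matrix (Fin n) (Fin n) ℝ) (b : Fin n → ℝ) (ω : ℝ)
    (i : Fin n) (z : Fin n → ℝ) : Fin n → ℝ :=
  Function.update z i (max (z i + (ω / A i i) * (b i - (A *ᵥ z) i)) 0)

private noncomputable def psorP (A : Matrix (Fin n) (Fin n) ℝ) (b : Fin n → ℝ) (ω : ℝ)
    (z : Fin n → ℝ) : ℕ → (Fin n → ℝ)
  | 0 => z
  | (m+1) => if h : m < n then psorT A b ω ⟨m, h⟩ (psorP A b ω z m) else psorP A b ω z m

variable (A : Matrix (Fin n) (Fin n) ℝ) (b : Fin n → ℝ) (ω : ℝ)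

private lemma psorP_before (z : Fin n → ℝ) (j : Fin n) :
    ∀ m, m ≤ j.val → psorP A b ω z m j = z j := by
  intro m
  induction m with
  | zero => intro _; rfl
  | succ m ih =>
    intro hm
    have hmn : m < n := lt_of_lt_of_le (Nat.lt_of_succ_le hm) j.isLt.le
    have hne : j ≠ (⟨m, hmn⟩ : Fin n) := Fin.ne_of_val_ne (show j.val ≠ m by omega)
    simp only [psorP, dif_pos hmn, psorT, Function.update_apply, if_neg hne]
    exact ih (le_of_lt (Nat.lt_of_succ_le hm))

private lemma psorP_after (z : Fin n → ℝ) (j : Fin n) :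
    ∀ m, j.val < m → psorP A b ω z m j = psorP A b ω z (j.val + 1) j := by
  intro m
  induction m with
  | zero => omega
  | succ m ih =>
    intro hm
    rcases Nat.lt_or_ge j.val m with h | h
    · by_cases hmn : m < n
      · have hne : j ≠ (⟨m, hmn⟩ : Fin n) := Fin.ne_of_val_ne (Nat.ne_of_lt h)
        simp only [psorP, dif_pos hmn, psorT, Function.update_apply, if_neg hne]
        exact ih h
      · simp only [psorP, dif_neg hmn]; exact ih h
    · have : m = j.val := by omega
      subst this; rfl

private lemma psorP_nonneg (z : Fin n → ℝ) (hz : ∀ j, 0 ≤ z j) :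
    ∀ m j, 0 ≤ psorP A b ω z m j := by
  intro m
  induction m with
  | zero => exact hz
  | succ m ih =>
    intro j
    by_cases hmn : m < n
    · simp only [psorP, dif_pos hmn, psorT, Function.update_apply]
      split
      · exact le_max_right _ _
      · exact ih j
    · simp only [psorP, dif_neg hmn]; exact ih j

private noncomputable def psorV (A : Matrix (Fin n) (Fin n) ℝ) (b : Fin n → ℝ)
    (y : Fin n → ℝ) : ℝ := (1/2) * (y ⬝ᵥ (A *ᵥ y)) - y ⬝ᵥ b

private lemma psorT_decrease (hsym : ∀ i j, A i j = A j i)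
    (hω0 : 0 < ω) (hω2 : ω < 2) (i : Fin n) (hd : 0 < A i i)
    (z : Fin n → ℝ) (hzi : 0 ≤ z i) :
    psorV A b (psorT A b ω i z) ≤
      psorV A b z - (A i i * (2 - ω) / (2 * ω)) * ((psorT A b ω i z) i - z i)^2 := by
  set a := A i i with ha
  set c := a * (2 - ω) / (2 * ω) with hcdef
  set r := b i - (A *ᵥ z) i with hr
  set t := max (z i + (ω / a) * r) 0 with ht
  have hti : (psorT A b ω i z) i = t := by
    simp [psorT, ht]; rfl
  have hq : psorV A b (psorT A b ω i z) =
      psorV A b z + (t - z i) * ((A *ᵥ z) i - b i) + (1/2) * (a * (t - z i)^2) := by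
    simpa [psorV, psorT] using psor_quad A hsym b z i t
  rw [hq, hti]
  set d := t - z i with hdd
  have hane : a ≠ 0 := ne_of_gt hd
  have h2ω : (0:ℝ) < 2 * ω := by linarith
  have hnr : (A *ᵥ z) i - b i = -r := by rw [hr]; ring
  rw [hnr, hcdef,
    show psorV A b z - a * (2 - ω) / (2 * ω) * d^2
      = psorV A b z + (-(a * (2 - ω) * d^2)) / (2 * ω) by ring,
    add_assoc, add_le_add_iff_left, le_div_iff₀ h2ω]
  clear_value d t r c a
  rcases le_or_gt 0 (z i + (ω / a) * r) with hs | hs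
  · have htt : t = z i + (ω / a) * r := ht.trans (max_eq_left hs)
    have had : a * d = ω * r := by
      rw [hdd, htt]; field_simp; ring
    have had3 : 2 * d * (a * d) = 2 * d * (ω * r) := by rw [had]
    nlinarith [had3]
  · have htt : t = 0 := ht.trans (max_eq_right hs.le)
    have hdneg : d = -(z i) := by rw [hdd, htt]; ring
    have hra : ω * r ≤ a * d := by
      have h1 : (ω / a) * r < -(z i) := by linarith
      have h2 : ω * r < a * (-(z i)) := by
        rw [div_mul_eq_mul_div, div_lt_iff₀ hd] at h1
        linarith [h1]
      rw [hdneg]; linarith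
    have hdle : (0:ℝ) ≤ -d := by rw [hdneg]; simpa using hzi
    nlinarith [mul_nonneg hdle (sub_nonneg.mpr hra)]

private lemma psorP_V_step (hsym : ∀ i j, A i j = A j i)
    (hω0 : 0 < ω) (hω2 : ω < 2) (hdiag : ∀ i, 0 < A i i)
    (z : Fin n → ℝ) (hz : ∀ j, 0 ≤ z j) (m : ℕ) :
    psorV A b (psorP A b ω z (m+1)) ≤ psorV A b (psorP A b ω z m) := by
  by_cases hmn : m < n
  · have hdec := psorT_decrease A b ω hsym hω0 hω2 ⟨m, hmn⟩ (hdiag _)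
      (psorP A b ω z m) (psorP_nonneg A b ω z hz m _)
    have hc : 0 ≤ A ⟨m, hmn⟩ ⟨m, hmn⟩ * (2 - ω) / (2 * ω) := by
      have := hdiag (⟨m, hmn⟩ : Fin n)
      apply div_nonneg (by nlinarith) (by linarith)
    simp only [psorP, dif_pos hmn]
    calc psorV A b (psorT A b ω ⟨m, hmn⟩ (psorP A b ω z m)) ≤ _ := hdec
    _ ≤ psorV A b (psorP A b ω z m) := by nlinarith [mul_nonneg hc (sq_nonneg ((psorT A b ω ⟨m, hmn⟩ (psorP A b ω z m)) ⟨m, hmn⟩ - psorP A b ω z m ⟨m, hmn⟩))]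
  · simp only [psorP, dif_neg hmn]; exact le_rfl

private lemma psorP_V_mono (hsym : ∀ i j, A i j = A j i)
    (hω0 : 0 < ω) (hω2 : ω < 2) (hdiag : ∀ i, 0 < A i i)
    (z : Fin n → ℝ) (hz : ∀ j, 0 ≤ z j) {m m' : ℕ} (h : m ≤ m') :
    psorV A b (psorP A b ω z m') ≤ psorV A b (psorP A b ω z m) := by
  induction m', h using Nat.le_induction with
  | base => exact le_rfl
  | succ m' hm ih => exact le_trans (psorP_V_step A b ω hsym hω0 hω2 hdiag z hz m') ih

private lemma psorP_sweep_decrease (hsym : ∀ i j, A i j = A j i)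
    (hω0 : 0 < ω) (hω2 : ω < 2) (hdiag : ∀ i, 0 < A i i)
    (z : Fin n → ℝ) (hz : ∀ j, 0 ≤ z j) (i : Fin n) :
    psorV A b (psorP A b ω z n) ≤
      psorV A b z - (A i i * (2 - ω) / (2 * ω)) * ((psorP A b ω z n) i - z i)^2 := by
  have h2 : psorP A b ω z (i.val + 1) = psorT A b ω i (psorP A b ω z i.val) := by
    simp only [psorP, dif_pos i.isLt, Fin.eta]
  have h1 : (psorP A b ω z n) i = (psorT A b ω i (psorP A b ω z i.val)) i := by
    rw [psorP_after A b ω z i n i.isLt, h2]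
  have h3 : (psorP A b ω z i.val) i = z i := psorP_before A b ω z i i.val le_rfl
  have hdec := psorT_decrease A b ω hsym hω0 hω2 i (hdiag i)
    (psorP A b ω z i.val) (by rw [h3]; exact hz i)
  have hm1 : psorV A b (psorP A b ω z n) ≤ psorV A b (psorP A b ω z (i.val + 1)) :=
    psorP_V_mono A b ω hsym hω0 hω2 hdiag z hz i.isLt
  have hm2 : psorV A b (psorP A b ω z i.val) ≤ psorV A b z :=
    psorP_V_mono A b ω hsym hω0 hω2 hdiag z hz (Nat.zero_le _)
  rw [h2] at hm1
  rw [h1, h3] at *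
  linarith [hdec, hm1, hm2]

private lemma psor_correspond (hdiag : ∀ i, 0 < A i i)
    (x : ℕ → Fin n → ℝ)
    (hsweep : ∀ k, ∀ i : Fin n,
      x (k + 1) i = max ((1 - ω) * x k i + (ω / A i i) *
        (b i - (∑ j ∈ univ.filter (fun j => j < i), A i j * x (k + 1) j) -
          (∑ j ∈ univ.filter (fun j => i < j), A i j * x k j))) 0) (k : ℕ) :
    ∀ m, m ≤ n → ∀ j : Fin n,
      psorP A b ω (x k) m j = if j.val < m then x (k + 1) j else x k j := by
  intro m
  induction m with
  | zero => intro _ j; simp [psorP]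
  | succ m ih =>
    intro hm j
    have hmn : m < n := hm
    have ih' := ih (le_of_lt (Nat.lt_of_succ_le hm))
    set i : Fin n := ⟨m, hmn⟩ with hi
    have hstep : psorP A b ω (x k) (m+1) = psorT A b ω i (psorP A b ω (x k) m) := by
      simp only [psorP, dif_pos hmn]; rfl
    rw [hstep]
    set w := psorP A b ω (x k) m with hwdef
    have hw : ∀ j' : Fin n, w j' = if j' < i then x (k+1) j' else x k j' := by
      intro j'
      rw [ih' j']
      simp only [Fin.lt_def]; rfl
    by_cases hji : j = i
    · subst hji
      rw [if_pos (by simp [hi])]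
      have hwi : w i = x k i := by rw [hw]; simp [lt_irrefl]
      have hAv : (A *ᵥ w) i =
          (∑ j' ∈ univ.filter (fun j' => j' < i), A i j' * x (k+1) j') +
            (A i i * x k i + ∑ j' ∈ univ.filter (fun j' => i < j'), A i j' * x k j') := by
        simp only [mulVec, dotProduct]
        rw [← Finset.sum_filter_add_sum_filter_not univ (fun j' => j' < i)]
        congr 1
        · refine Finset.sum_congr rfl fun j' hj' => ?_
          rw [hw j', if_pos (Finset.mem_filter.mp hj').2]
        · have hset : univ.filter (fun j' => ¬ j' < i) =
              insert i (univ.filter (fun j' => i < j')) := by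
            ext j'
            simp only [Finset.mem_filter, Finset.mem_univ, true_and, Finset.mem_insert, not_lt]
            constructor
            · intro h; rcases eq_or_lt_of_le h with h | h
              · exact Or.inl h.symm
              · exact Or.inr h
            · rintro (rfl | h)
              · exact le_rfl
              · exact h.le
          rw [hset, Finset.sum_insert (by simp)]
          rw [hwi]
          congr 1
          refine Finset.sum_congr rfl fun j' hj' => ?_
          rw [hw j', if_neg]
          exact not_lt_of_gt (Finset.mem_filter.mp hj').2
      rw [hsweep k i]
      simp only [psorT, Function.update_self]
      congr 1
      rw [hAv, hwi]
      have hane : A i i ≠ 0 := ne_of_gt (hdiag i)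
      field_simp
      ring
    · rw [show psorT A b ω i w j = w j from Function.update_of_ne hji _ _]
      rw [ih' j]
      have hjm : j.val ≠ m := by
        intro h; exact hji (Fin.ext (by simp [hi, h]))
      rcases Nat.lt_or_ge j.val m with h | h
      · rw [if_pos h, if_pos (Nat.lt_succ_of_lt h)]
      · rw [if_neg (Nat.not_lt.mpr h), if_neg (by omega)]

private lemma psorT_cont (i : Fin n) : Continuous (psorT A b ω i) := by
  have hAv : Continuous fun z : Fin n → ℝ => (A *ᵥ z) i := by
    simp only [mulVec, dotProduct]
    exact continuous_finset_sum _ fun j _ => continuous_const.mul (continuous_apply j)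
  apply continuous_pi
  intro j
  have : (fun z => psorT A b ω i z j) =
      fun z => if j = i then max (z i + (ω / A i i) * (b i - (A *ᵥ z) i)) 0 else z j := by
    funext z; simp [psorT, Function.update_apply]
  rw [this]
  split_ifs with h
  · exact ((continuous_apply i).add (continuous_const.mul
      (continuous_const.sub hAv))).max continuous_const
  · exact continuous_apply j

private lemma psorP_cont (m : ℕ) : Continuous (fun z : Fin n → ℝ => psorP A b ω z m) := by
  induction m with
  | zero => exact continuous_id
  | succ m ih =>
    by_cases hmn : m < n
    · simp only [psorP, dif_pos hmn]
      exact (psorT_cont A b ω ⟨m, hmn⟩).comp ih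
    · simp only [psorP, dif_neg hmn]; exact ih

private lemma psor_fixed (hsym : ∀ i j, A i j = A j i)
    (hω0 : 0 < ω) (hω2 : ω < 2) (hdiag : ∀ i, 0 < A i i)
    (p : Fin n → ℝ) (hp : ∀ j, 0 ≤ p j) (hfix : psorP A b ω p n = p) :
    ∀ i, b i - (A *ᵥ p) i ≤ 0 ∧ p i * (b i - (A *ᵥ p) i) = 0 := by
  have hall : ∀ m, m ≤ n → psorP A b ω p m = p := by
    intro m
    induction m with
    | zero => intro _; rfl
    | succ m ih =>
      intro hm
      have hmn : m < n := hm
      have hPm : psorP A b ω p m = p := ih (le_of_lt hm)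
      have hstep : psorP A b ω p (m+1) = psorT A b ω ⟨m, hmn⟩ p := by
        simp only [psorP, dif_pos hmn, hPm]
      set i : Fin n := ⟨m, hmn⟩ with hi
      have hdec := psorT_decrease A b ω hsym hω0 hω2 i (hdiag i) p (hp i)
      have hmono := psorP_V_mono A b ω hsym hω0 hω2 hdiag p hp hm
      rw [hfix, hstep] at hmono
      have hc : 0 < A i i * (2 - ω) / (2 * ω) :=
        div_pos (by nlinarith [hdiag i]) (by linarith)
      have hcd : A i i * (2 - ω) / (2 * ω) * ((psorT A b ω i p) i - p i)^2 ≤ 0 := by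
        linarith [hdec, hmono]
      have hsq : ((psorT A b ω i p) i - p i)^2 = 0 := by
        nlinarith [sq_nonneg ((psorT A b ω i p) i - p i), hcd, hc]
      have ht : (psorT A b ω i p) i = p i := by
        have := pow_eq_zero_iff (n := 2) (two_ne_zero) |>.mp hsq
        linarith [sub_eq_zero.mp this]
      rw [hstep]
      funext j
      by_cases hj : j = i
      · subst hj; exact ht
      · simp [psorT, Function.update_of_ne hj]
  intro i
  have h1 : psorP A b ω p (i.val + 1) = psorT A b ω i p := by
    simp only [psorP, dif_pos i.isLt, Fin.eta, hall i.val (le_of_lt i.isLt)]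
  have h2 : psorT A b ω i p = p := by
    rw [← h1]; exact hall (i.val + 1) (Nat.succ_le_of_lt i.isLt)
  have heq : p i = max (p i + (ω / A i i) * (b i - (A *ᵥ p) i)) 0 := by
    conv_lhs => rw [← h2]
    simp [psorT]
  set a := A i i with ha
  set r := b i - (A *ᵥ p) i with hr
  have hapos : 0 < a := hdiag i
  have hωa : 0 < ω / a := div_pos hω0 hapos
  constructor
  · by_contra hrpos
    push_neg at hrpos
    have h3 : p i + (ω / a) * r > p i := by nlinarith [mul_pos hωa hrpos]
    have h4 := le_max_left (p i + (ω / a) * r) 0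
    linarith [heq ▸ h4]
  · rcases (hp i).eq_or_lt with h0 | h0
    · rw [← h0]; ring
    · rcases le_or_gt (p i + (ω / a) * r) 0 with h5 | h5
      · rw [max_eq_right h5] at heq; linarith
      · rw [max_eq_left h5.le] at heq
        have h6 : (ω / a) * r = 0 := by linarith
        have h7 : r = 0 := by
          rcases mul_eq_zero.mp h6 with h | h
          · exact absurd h (ne_of_gt hωa)
          · exact h
        rw [h7]; ring

private lemma psor_kkt (hsym : ∀ i j, A i j = A j i)
    (hPSD : ∀ y : Fin n → ℝ, 0 ≤ y ⬝ᵥ (A *ᵥ y)) (p : Fin n → ℝ) (hp : ∀ j, 0 ≤ p j)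
    (hcond : ∀ i, b i - (A *ᵥ p) i ≤ 0 ∧ p i * (b i - (A *ᵥ p) i) = 0) :
    ∀ y : Fin n → ℝ, (∀ j, 0 ≤ y j) → psorV A b p ≤ psorV A b y := by
  intro y hy
  have hexp := psor_expand A hsym b p y
  have h1 : 0 ≤ (y - p) ⬝ᵥ (A *ᵥ p - b) := by
    simp only [dotProduct, Pi.sub_apply]
    refine Finset.sum_nonneg fun i _ => ?_
    have hc1 := (hcond i).1
    have hc2 := (hcond i).2
    nlinarith [hy i]
  have h2 := hPSD (y - p)
  simp only [psorV]
  linarith [hexp]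

private lemma psor_mu (hA : A.PosDef) :
    ∃ μ : ℝ, 0 < μ ∧ ∀ y : Fin n → ℝ, μ * ‖y‖^2 ≤ y ⬝ᵥ (A *ᵥ y) := by
  rcases Nat.eq_zero_or_pos n with hn | hn
  · refine ⟨1, one_pos, fun y => ?_⟩
    subst hn
    have hy : y = 0 := Subsingleton.elim _ _
    subst hy
    rw [norm_zero]
    simp
  · haveI : Nonempty (Fin n) := ⟨⟨0, hn⟩⟩
    have hS : (Metric.sphere (0 : Fin n → ℝ) 1).Nonempty :=
      NormedSpace.sphere_nonempty.mpr zero_le_one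
    obtain ⟨y₀, hy₀S, hmin⟩ := (isCompact_sphere (0 : Fin n → ℝ) 1).exists_isMinOn hS
      (psor_cont_quad A).continuousOn
    have hy₀n : ‖y₀‖ = 1 := mem_sphere_zero_iff_norm.mp hy₀S
    have hy₀0 : y₀ ≠ 0 := by
      intro h; rw [h, norm_zero] at hy₀n; exact one_ne_zero hy₀n.symm
    have hμ : 0 < y₀ ⬝ᵥ (A *ᵥ y₀) := by
      have := hA.dotProduct_mulVec_pos hy₀0
      simpa using this
    refine ⟨y₀ ⬝ᵥ (A *ᵥ y₀), hμ, fun y => ?_⟩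
    by_cases hy : y = 0
    · subst hy; simp
    · set c := ‖y‖ with hc
      have hc0 : 0 < c := norm_pos_iff.mpr hy
      have hcc : c⁻¹ * c = 1 := inv_mul_cancel₀ (ne_of_gt hc0)
      have hu : c⁻¹ • y ∈ Metric.sphere (0 : Fin n → ℝ) 1 := by
        rw [mem_sphere_zero_iff_norm, norm_smul, Real.norm_eq_abs,
          abs_of_pos (inv_pos.mpr hc0), ← hc, hcc]
      have hle : y₀ ⬝ᵥ (A *ᵥ y₀) ≤ (c⁻¹ • y) ⬝ᵥ (A *ᵥ (c⁻¹ • y)) := hmin hu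
      have hval : (c⁻¹ • y) ⬝ᵥ (A *ᵥ (c⁻¹ • y)) = c⁻¹ * (c⁻¹ * (y ⬝ᵥ (A *ᵥ y))) := by
        rw [mulVec_smul, smul_dotProduct, dotProduct_smul]
        simp [smul_eq_mul]
      rw [hval] at hle
      have hQeq : c⁻¹ * (c⁻¹ * (y ⬝ᵥ (A *ᵥ y))) * c^2 = y ⬝ᵥ (A *ᵥ y) := by
        field_simp
      calc y₀ ⬝ᵥ (A *ᵥ y₀) * ‖y‖^2 = y₀ ⬝ᵥ (A *ᵥ y₀) * c^2 := by rw [hc]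
        _ ≤ c⁻¹ * (c⁻¹ * (y ⬝ᵥ (A *ᵥ y))) * c^2 :=
            mul_le_mul_of_nonneg_right hle (sq_nonneg c)
        _ = y ⬝ᵥ (A *ᵥ y) := hQeq

private lemma psor_lower (μ : ℝ) (hμ : 0 < μ)
    (hμA : ∀ y : Fin n → ℝ, μ * ‖y‖^2 ≤ y ⬝ᵥ (A *ᵥ y)) (G : ℝ) (y : Fin n → ℝ)
    (hy : max 1 (2 * ((∑ i, |b i|) + |G| + 1) / μ) < ‖y‖) : G < psorV A b y := by
  set B := ∑ i, |b i| with hB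
  have hB0 : 0 ≤ B := Finset.sum_nonneg fun i _ => abs_nonneg _
  set t := ‖y‖ with htdef
  have ht1 : 1 < t := lt_of_le_of_lt (le_max_left _ _) hy
  have ht2 : 2 * (B + |G| + 1) / μ < t := lt_of_le_of_lt (le_max_right _ _) hy
  have ht0 : 0 < t := lt_trans one_pos ht1
  have h3 : 2 * (B + |G| + 1) < μ * t := by
    rw [div_lt_iff₀ hμ] at ht2; linarith
  have hdb : y ⬝ᵥ b ≤ B * t := by
    simp only [dotProduct]
    calc ∑ i, y i * b i ≤ ∑ i, |y i * b i| :=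
          Finset.sum_le_sum fun i _ => le_abs_self _
      _ ≤ ∑ i, t * |b i| := by
          refine Finset.sum_le_sum fun i _ => ?_
          rw [abs_mul]
          exact mul_le_mul_of_nonneg_right
            (by simpa [Real.norm_eq_abs] using norm_le_pi_norm y i) (abs_nonneg _)
      _ = B * t := by rw [hB, Finset.sum_mul]; exact Finset.sum_congr rfl fun i _ => mul_comm _ _
  have hQ : μ * t^2 ≤ y ⬝ᵥ (A *ᵥ y) := hμA y
  simp only [psorV]
  nlinarith [mul_lt_mul_of_pos_right h3 ht0, le_abs_self G, abs_nonneg G,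
    mul_nonneg (by linarith [abs_nonneg G] : (0:ℝ) ≤ |G| + 1) (by linarith : (0:ℝ) ≤ t - 1)]

theorem stmt_18 (n : ℕ) (A : Matrix (Fin n) (Fin n) ℝ) (hA : A.PosDef)
    (b : Fin n → ℝ)
    (ω : ℝ) (hω : ω ∈ Set.Ioo (0 : ℝ) 2)
    (V : (Fin n → ℝ) → ℝ)
    (hV : V = fun x => (1 / 2) * (x ⬝ᵥ (A *ᵥ x)) - x ⬝ᵥ b)
    (x : ℕ → Fin n → ℝ) (hx0 : ∀ j, 0 ≤ x 0 j)
    (hsweep : ∀ k, ∀ i : Fin n,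
      x (k + 1) i = max ((1 - ω) * x k i + (ω / A i i) *
        (b i - (∑ j ∈ univ.filter (fun j => j < i), A i j * x (k + 1) j) -
          (∑ j ∈ univ.filter (fun j => i < j), A i j * x k j))) 0) :
    (∃! xs : Fin n → ℝ, (∀ i, 0 ≤ xs i) ∧
      ∀ y : Fin n → ℝ, (∀ i, 0 ≤ y i) → V xs ≤ V y) ∧
    ∀ xs : Fin n → ℝ, ((∀ i, 0 ≤ xs i) ∧
        ∀ y : Fin n → ℝ, (∀ i, 0 ≤ y i) → V xs ≤ V y) →
      Tendsto x atTop (nhds xs) := by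
  obtain ⟨hω0, hω2⟩ := hω
  have hVp : V = psorV A b := hV
  rw [hVp]
  clear hV hVp
  -- basic consequences of positive definiteness
  have hsym : ∀ i j, A i j = A j i := by
    intro i j
    conv_lhs => rw [← hA.1]
    simp [conjTranspose_apply]
  have hdiag : ∀ i, 0 < A i i := by
    intro i
    have h1 : (Pi.single i 1 : Fin n → ℝ) ≠ 0 := by
      intro h
      have := congrFun h i
      simp at this
    have h2 := hA.dotProduct_mulVec_pos h1
    simpa using h2
  have hPSD : ∀ y : Fin n → ℝ, 0 ≤ y ⬝ᵥ (A *ᵥ y) := fun y => by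
    have := (posSemidef_iff_dotProduct_mulVec.mp hA.posSemidef).2 y
    simpa using this
  have hPD : ∀ y : Fin n → ℝ, y ≠ 0 → 0 < y ⬝ᵥ (A *ᵥ y) := fun y hy => by
    simpa using hA.dotProduct_mulVec_pos hy
  obtain ⟨μ, hμ0, hμA⟩ := psor_mu A hA
  have hVcont : Continuous (psorV A b) := by
    have h1 : Continuous fun y : Fin n → ℝ => y ⬝ᵥ b := by
      simp only [dotProduct]
      exact continuous_finset_sum _ fun i _ => (continuous_apply i).mul continuous_const
    exact (continuous_const.mul (psor_cont_quad A)).sub h1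
  set C : Set (Fin n → ℝ) := {y | ∀ i, 0 ≤ y i} with hC
  have hCclosed : IsClosed C := by
    have hCi : C = ⋂ i, (fun y : Fin n → ℝ => y i) ⁻¹' (Set.Ici 0) := by
      ext y; simp [hC, Set.mem_iInter]
    rw [hCi]
    exact isClosed_iInter fun i => IsClosed.preimage (continuous_apply i) isClosed_Ici
  -- existence of a minimizer
  set R := max 1 (2 * ((∑ i, |b i|) + |psorV A b 0| + 1) / μ) with hR
  have hR0 : (0 : ℝ) ≤ R := le_trans zero_le_one (le_max_left _ _)
  have h0K : (0 : Fin n → ℝ) ∈ C ∩ Metric.closedBall 0 R :=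
    ⟨fun i => le_rfl, by simp [Metric.mem_closedBall, hR0]⟩
  obtain ⟨xs, hxsK, hxsmin⟩ := ((isCompact_closedBall (0 : Fin n → ℝ) R).inter_left
    hCclosed).exists_isMinOn ⟨0, h0K⟩ hVcont.continuousOn
  have hxsC : ∀ i, 0 ≤ xs i := hxsK.1
  have hxsglobal : ∀ y, (∀ i, 0 ≤ y i) → psorV A b xs ≤ psorV A b y := by
    intro y hy
    by_cases hyb : ‖y‖ ≤ R
    · exact hxsmin ⟨hy, by simpa [Metric.mem_closedBall, dist_zero_right] using hyb⟩
    · push_neg at hyb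
      have hlow := psor_lower A b μ hμ0 hμA (psorV A b 0) y hyb
      have h0 : psorV A b xs ≤ psorV A b 0 := hxsmin h0K
      linarith
  -- uniqueness of the minimizer
  have huniq : ∀ ys, (∀ i, 0 ≤ ys i) →
      (∀ y, (∀ i, 0 ≤ y i) → psorV A b ys ≤ psorV A b y) → ys = xs := by
    intro ys hysC hysmin
    by_contra hne
    set d := ys - xs with hd
    have hd0 : d ≠ 0 := by
      intro h
      exact hne (sub_eq_zero.mp h)
    set m := xs + (1/2 : ℝ) • d with hmdef
    have hmC : ∀ i, 0 ≤ m i := by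
      intro i
      have h1 := hxsC i
      have h2 := hysC i
      simp only [hmdef, hd, Pi.add_apply, Pi.smul_apply, Pi.sub_apply, smul_eq_mul]
      linarith
    have hQ : 0 < d ⬝ᵥ (A *ᵥ d) := hPD d hd0
    have e1 := psor_expand A hsym b xs m
    have e2 := psor_expand A hsym b ys m
    have hm1 : m - xs = (1/2 : ℝ) • d := by
      funext j; simp [hmdef]
    have hm2 : m - ys = (-(1/2) : ℝ) • d := by
      funext j; simp [hmdef, hd]; ring
    rw [hm1] at e1
    rw [hm2] at e2
    rw [smul_dotProduct, mulVec_smul, dotProduct_smul, smul_dotProduct] at e1 e2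
    simp only [smul_eq_mul] at e1 e2
    have hXY : d ⬝ᵥ (A *ᵥ xs - b) - d ⬝ᵥ (A *ᵥ ys - b) = -(d ⬝ᵥ (A *ᵥ d)) := by
      have hAys : A *ᵥ ys = A *ᵥ xs + A *ᵥ d := by
        rw [← mulVec_add]
        congr 1
        funext j
        simp [hd]
      rw [hAys]
      simp only [dotProduct_sub, dotProduct_add]
      ring
    have hle1 : psorV A b xs ≤ psorV A b m := hxsglobal m hmC
    have heqm : psorV A b xs = psorV A b ys :=
      le_antisymm (hxsglobal ys hysC) (hysmin xs hxsC)
    simp only [psorV] at hle1 heqm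
    linarith [e1, e2, hXY, hle1, heqm, hQ]
  -- iterates
  have hxnn : ∀ k j, 0 ≤ x k j := by
    intro k
    induction k with
    | zero => exact hx0
    | succ k ih =>
      intro j
      rw [hsweep k j]
      exact le_max_right _ _
  have hcorr : ∀ k, x (k + 1) = psorP A b ω (x k) n := by
    intro k
    funext j
    rw [psor_correspond A b ω hdiag x hsweep k n le_rfl j, if_pos j.isLt]
  set L : ℕ → ℝ := fun k => psorV A b (x k) with hL
  have hLmono : ∀ k, L (k + 1) ≤ L k := by
    intro k
    have : psorV A b (x (k + 1)) ≤ psorV A b (x k) := by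
      rw [hcorr k]
      exact psorP_V_mono A b ω hsym hω0 hω2 hdiag (x k) (hxnn k) (Nat.zero_le n)
    exact this
  have hanti : Antitone L := antitone_nat_of_succ_le hLmono
  have hLbdd : BddBelow (Set.range L) := by
    refine ⟨psorV A b xs, ?_⟩
    rintro _ ⟨k, rfl⟩
    exact hxsglobal (x k) (hxnn k)
  have hl : Tendsto L atTop (nhds (⨅ k, L k)) := tendsto_atTop_ciInf hanti hLbdd
  have hdiff0 : Tendsto (fun k => L k - L (k + 1)) atTop (nhds 0) := by
    have := hl.sub (hl.comp (tendsto_add_atTop_nat 1))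
    simpa using this
  have hdcoord : ∀ i : Fin n, Tendsto (fun k => x (k + 1) i - x k i) atTop (nhds 0) := by
    intro i
    set ci := A i i * (2 - ω) / (2 * ω) with hci
    have hcipos : 0 < ci := div_pos (by nlinarith [hdiag i]) (by linarith)
    have hsq : ∀ k, (x (k + 1) i - x k i)^2 ≤ (L k - L (k + 1)) / ci := by
      intro k
      have hdec := psorP_sweep_decrease A b ω hsym hω0 hω2 hdiag (x k) (hxnn k) i
      rw [← hcorr k] at hdec
      rw [le_div_iff₀ hcipos]
      have : psorV A b (x (k+1)) = L (k+1) := rfl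
      nlinarith [hdec]
    have hg : Tendsto (fun k => Real.sqrt ((L k - L (k + 1)) / ci)) atTop (nhds 0) := by
      have h0 : Tendsto (fun k => (L k - L (k + 1)) / ci) atTop (nhds 0) := by
        simpa using hdiff0.div_const ci
      have := (Real.continuous_sqrt.tendsto 0).comp h0
      rwa [Real.sqrt_zero] at this
    apply squeeze_zero_norm _ hg
    intro k
    rw [Real.norm_eq_abs, ← Real.sqrt_sq_eq_abs]
    exact Real.sqrt_le_sqrt (hsq k)
  set M := max 1 (2 * ((∑ i, |b i|) + |L 0| + 1) / μ) with hM
  have hbound : ∀ k, x k ∈ C ∩ Metric.closedBall 0 M := by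
    intro k
    refine ⟨hxnn k, ?_⟩
    rw [Metric.mem_closedBall, dist_zero_right]
    by_contra hgt
    push_neg at hgt
    have hlow := psor_lower A b μ hμ0 hμA (L 0) (x k) hgt
    have hLk : L k ≤ L 0 := hanti (Nat.zero_le k)
    have : L 0 < L k := hlow
    linarith
  have hK2 : IsCompact (C ∩ Metric.closedBall (0 : Fin n → ℝ) M) :=
    (isCompact_closedBall _ _).inter_left hCclosed
  constructor
  · exact ⟨xs, ⟨hxsC, fun y hy => hxsglobal y hy⟩, fun ys hys => huniq ys hys.1 hys.2⟩
  · rintro xs' ⟨h1, h2⟩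
    have hxx : xs' = xs := huniq xs' h1 h2
    subst hxx
    apply tendsto_of_subseq_tendsto
    intro ns hns
    obtain ⟨p, hpK2, φ, hφmono, hφconv⟩ := hK2.tendsto_subseq (fun m => hbound (ns m))
    have hφconv' : Tendsto (fun m => x (ns (φ m))) atTop (nhds p) := hφconv
    refine ⟨φ, ?_⟩
    suffices hp : p = xs' by
      rw [← hp]
      exact hφconv'
    have hnsφ : Tendsto (fun m => ns (φ m)) atTop atTop := hns.comp hφmono.tendsto_atTop
    have hdiffv : Tendsto (fun k => x (k + 1) - x k) atTop (nhds 0) := by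
      rw [tendsto_pi_nhds]
      intro i
      simpa using hdcoord i
    have h1' : Tendsto (fun m => x (ns (φ m) + 1)) atTop (nhds p) := by
      have hsum := hφconv'.add (hdiffv.comp hnsφ)
      have heq : (fun m => x (ns (φ m)) + (x (ns (φ m) + 1) - x (ns (φ m)))) =
          fun m => x (ns (φ m) + 1) := by
        funext m
        abel
      simp only [Function.comp] at hsum
      rw [heq] at hsum
      simpa using hsum
    have h2' : Tendsto (fun m => x (ns (φ m) + 1)) atTop (nhds (psorP A b ω p n)) := by
      have hc := ((psorP_cont A b ω n).tendsto p).comp hφconv'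
      have heq : (fun m => psorP A b ω (x (ns (φ m))) n) = fun m => x (ns (φ m) + 1) := by
        funext m
        exact (hcorr _).symm
      rw [← heq]
      exact hc
    have hfix : psorP A b ω p n = p := tendsto_nhds_unique h2' h1'
    have hpC : ∀ j, 0 ≤ p j := hpK2.1
    have hkkt := psor_fixed A b ω hsym hω0 hω2 hdiag p hpC hfix
    have hpmin := psor_kkt A b hsym hPSD p hpC hkkt
    exact huniq p hpC hpmin
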